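/- arXiv:0704.0002 — 2 statements merged into one kernel-verified Lean document; each statement's English description precedes it below -/
import Mathlib

section
/- (The canonical pebble-slide move.) In the (k,ℓ)-pebble game with colors, any sequence of pebble-slide moves from a reachable configuration that makes a given add-edge move possible can be replaced by a sequence of pebble-slide moves from the same configuration, none of which creates a monochromatic cycle, after which the same add-edge move is possible. -/
open scoped Classical

namespace PebbleGame

/-- A configuration of the `(k,ℓ)`-pebble game with colors: a directed multigraph
whose edges are records `(tail, head, color)` (the color of an edge is the color of
the unique pebble lying on it), together with the multiset of colors of the pebbles
sitting on each vertex. -/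
structure PGConfig (V : Type) (k : ℕ) where
  edges : Multiset (V × V × Fin k)
  pebs : V → Multiset (Fin k)

variable {V : Type} [DecidableEq V] {k ℓ : ℕ}

/-- The configuration resulting from an add-edge move: a pebble of color `c` is picked
up from `v`, the directed edge `vw` is added and the pebble is placed on it. -/
def addEdgeCfg (H : PGConfig V k) (v w : V) (c : Fin k) : PGConfig V k :=
  ⟨(v, w, c) ::ₘ H.edges, Function.update H.pebs v ((H.pebs v).erase c)⟩

/-- The configuration resulting from a pebble-slide move along the edge `(v, w, c)`,
using a pebble of color `c'` on `w`: the edge `vw` is replaced by `wv`, the pebble of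
color `c` that was on the edge goes to `v`, and the pebble of color `c'` from `w` is
placed on the new edge `wv`. -/
def slideCfg (H : PGConfig V k) (v w : V) (c c' : Fin k) : PGConfig V k :=
  ⟨(w, v, c') ::ₘ H.edges.erase (v, w, c),
    Function.update (Function.update H.pebs w ((H.pebs w).erase c')) v
      (c ::ₘ Function.update H.pebs w ((H.pebs w).erase c') v)⟩

/-- A legal move of the `(k,ℓ)`-pebble game with colors. -/
inductive Step (k ℓ : ℕ) : PGConfig V k → PGConfig V k → Prop
  | add (H : PGConfig V k) (v w : V) (c : Fin k)
      (hpeb : ℓ + 1 ≤ ∑ u ∈ ({v, w} : Finset V), (H.pebs u).card)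
      (hc : c ∈ H.pebs v) :
      Step k ℓ H (addEdgeCfg H v w c)
  | slide (H : PGConfig V k) (v w : V) (c c' : Fin k)
      (he : (v, w, c) ∈ H.edges)
      (hc : c' ∈ H.pebs w) :
      Step k ℓ H (slideCfg H v w c c')

/-- The initial configuration: no edges, and one pebble of each of the `k` colors on
every vertex. -/
def initCfg (V : Type) [DecidableEq V] [Fintype V] (k : ℕ) : PGConfig V k :=
  ⟨0, fun _ => Finset.univ.val⟩

/-- A configuration is reachable if it arises from the initial configuration by a
finite sequence of legal moves. -/
def Reachable [Fintype V] (k ℓ : ℕ) (H : PGConfig V k) : Prop :=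
  Relation.ReflTransGen (Step k ℓ) (initCfg V k) H

/-- The underlying undirected multigraph (multiset of edges) of a configuration. -/
def undirected (H : PGConfig V k) : Multiset (Sym2 V) :=
  H.edges.map fun e => s(e.1, e.2.1)

/-- The (undirected) edges of a configuration carrying a pebble of color `c`. -/
def monoEdges (H : PGConfig V k) (c : Fin k) : Multiset (Sym2 V) :=
  (H.edges.filter fun e => e.2.2 = c).map fun e => s(e.1, e.2.1)

/-- The undirected edges of color `c` among a multiset `F` of directed colored
edges. -/
def monoOf (F : Multiset (V × V × Fin k)) (c : Fin k) : Multiset (Sym2 V) :=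
  (F.filter fun e => e.2.2 = c).map fun e => s(e.1, e.2.1)

/-- `G` (a multiset of undirected edges on the fixed finite vertex set `V`) is a
`(k,ℓ)`-pebble-game graph if it is the underlying undirected multigraph of some
reachable configuration. -/
def PebbleGameGraph [Fintype V] (k ℓ : ℕ) (E : Multiset (Sym2 V)) : Prop :=
  ∃ H : PGConfig V k, Reachable k ℓ H ∧ undirected H = E

/-- The edges of `E` spanned by the vertex set `S` (both endpoints in `S`). -/
def spanned (E : Multiset (Sym2 V)) (S : Finset V) : Multiset (Sym2 V) :=
  E.filter fun e => e ∈ S.sym2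

/-- A multigraph is `(k,ℓ)`-sparse if every nonempty set of `n'` vertices spans at
most `k n' - ℓ` edges. -/
def Sparse (k ℓ : ℕ) (E : Multiset (Sym2 V)) : Prop :=
  ∀ S : Finset V, S.Nonempty → (spanned E S).card ≤ k * S.card - ℓ

/-- A multigraph is `(k,ℓ)`-tight if it is `(k,ℓ)`-sparse with exactly `k|V| - ℓ`
edges. -/
def Tight [Fintype V] (k ℓ : ℕ) (E : Multiset (Sym2 V)) : Prop :=
  Sparse k ℓ E ∧ E.card = k * Fintype.card V - ℓ

/-- Connectivity (as undirected multigraphs) via the edges of `F`. -/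
def Conn (F : Multiset (Sym2 V)) : V → V → Prop :=
  Relation.ReflTransGen fun a b => s(a, b) ∈ F

/-- The connected components of the graph with vertex set `S` and edge multiset `F`
(whose edges are assumed to be spanned by `S`), as a finset of vertex sets. -/
noncomputable def components (S : Finset V) (F : Multiset (Sym2 V)) : Finset (Finset V) :=
  S.image fun v => S.filter fun u => Conn F v u

/-- The tree-pieces of the graph `(S, F)`: connected components that contain no cycle,
i.e. whose spanned edge count is exactly one less than their vertex count (an isolated
vertex is a tree-piece). -/
noncomputable def treePieces (S : Finset V) (F : Multiset (Sym2 V)) : Finset (Finset V) :=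
  (components S F).filter fun C => (spanned F C).card + 1 = C.card

/-- The number of tree-pieces of the graph `(S, F)`. -/
noncomputable def treePieceCount (S : Finset V) (F : Multiset (Sym2 V)) : ℕ :=
  (treePieces S F).card

/-- A multigraph contains a cycle iff some nonempty vertex set spans at least as many
edges as it has vertices. -/
def HasCycle (F : Multiset (Sym2 V)) : Prop :=
  ∃ S : Finset V, S.Nonempty ∧ S.card ≤ (spanned F S).card

/-- A spanning tree on the whole (finite) vertex set: connected with `|V| - 1` edges. -/
def IsSpanningTree [Fintype V] (T : Multiset (Sym2 V)) : Prop :=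
  (∀ u v : V, Conn T u v) ∧ T.card + 1 = Fintype.card V

/-- A spanning map-graph: the edges admit an orientation in which every vertex has
out-degree exactly one. -/
def IsSpanningMapGraph [Fintype V] (T : Multiset (Sym2 V)) : Prop :=
  ∃ M : Multiset (V × V), M.map (fun p => s(p.1, p.2)) = T ∧
    ∀ v : V, (M.filter fun p => p.1 = v).card = 1

/-- A `(k,ℓ)`-maps-and-trees decomposition: `ℓ` edge-disjoint spanning trees and
`k - ℓ` edge-disjoint spanning map-graphs whose union is `E`. -/
def MapsAndTrees [Fintype V] (k ℓ : ℕ) (E : Multiset (Sym2 V)) : Prop :=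
  ∃ (T : Fin ℓ → Multiset (Sym2 V)) (M : Fin (k - ℓ) → Multiset (Sym2 V)),
    ((∑ i, T i) + ∑ j, M j) = E ∧ (∀ i, IsSpanningTree (T i)) ∧
      ∀ j, IsSpanningMapGraph (M j)

/-- `(S, T)` is a (possibly single-vertex) tree: nonempty vertex set `S`, edges spanned
by `S`, connected on `S`, and `|T| + 1 = |S|`. -/
def IsTreeOn (S : Finset V) (T : Multiset (Sym2 V)) : Prop :=
  S.Nonempty ∧ (∀ e ∈ T, e ∈ S.sym2) ∧ (∀ u ∈ S, ∀ v ∈ S, Conn T u v) ∧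
    T.card + 1 = S.card

/-- An `ℓTk` decomposition of `E`: `ℓ` edge-disjoint (not necessarily spanning,
possibly single-vertex) trees `(S i, T i)` whose edges partition `E`, such that every
vertex belongs to exactly `k` of the trees. -/
def LTkDecomp (k ℓ : ℕ) (E : Multiset (Sym2 V)) (S : Fin ℓ → Finset V)
    (T : Fin ℓ → Multiset (Sym2 V)) : Prop :=
  (∑ i, T i) = E ∧ (∀ i, IsTreeOn (S i) (T i)) ∧
    ∀ v : V, (Finset.univ.filter fun i => v ∈ S i).card = k

/-- A proper `ℓTk`: an `ℓTk` decomposition such that every nonempty subgraph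
(vertex set `U`, together with a sub-multiset `F i` of each tree spanned by `U`)
contains at least `ℓ` tree-pieces, the tree-pieces being the connected components of
the intersections of the trees with the subgraph. -/
def ProperLTk (k ℓ : ℕ) (E : Multiset (Sym2 V)) : Prop :=
  ∃ (S : Fin ℓ → Finset V) (T : Fin ℓ → Multiset (Sym2 V)),
    LTkDecomp k ℓ E S T ∧
      ∀ U : Finset V, U.Nonempty →
        ∀ F : Fin ℓ → Multiset (Sym2 V),
          (∀ i, F i ≤ T i) → (∀ i, ∀ e ∈ F i, e ∈ U.sym2) →
            ℓ ≤ ∑ i, treePieceCount (U ∩ S i) (F i)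

/-- One pebble-slide move (as a relation between configurations). -/
def SlideRel (k : ℕ) (A B : PGConfig V k) : Prop :=
  ∃ (v w : V) (c c' : Fin k), (v, w, c) ∈ A.edges ∧ c' ∈ A.pebs w ∧
    B = slideCfg A v w c c'

/-- A canonical move of the `(k,ℓ)`-pebble game with colors: add-edge moves cover the
new edge with a color present on both endpoints if one exists, and otherwise with the
highest-numbered color present; pebble-slide moves never create a monochromatic
cycle. -/
inductive CanStep (k ℓ : ℕ) : PGConfig V k → PGConfig V k → Prop
  | add (H : PGConfig V k) (v w : V) (c : Fin k)
      (hpeb : ℓ + 1 ≤ ∑ u ∈ ({v, w} : Finset V), (H.pebs u).card)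
      (hc : c ∈ H.pebs v)
      (hcanon : c ∈ H.pebs w ∨
        ((∀ c' : Fin k, c' ∈ H.pebs v → c' ∉ H.pebs w) ∧
          ∀ c' : Fin k, (c' ∈ H.pebs v ∨ c' ∈ H.pebs w) → c' ≤ c)) :
      CanStep k ℓ H (addEdgeCfg H v w c)
  | slide (H : PGConfig V k) (v w : V) (c c' : Fin k)
      (he : (v, w, c) ∈ H.edges)
      (hc : c' ∈ H.pebs w)
      (hnocycle : ∀ i : Fin k,
        HasCycle (monoEdges (slideCfg H v w c c') i) → HasCycle (monoEdges H i)) :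
      CanStep k ℓ H (slideCfg H v w c c')

/-- The graph obtained from a configuration by replacing every pebble lying on a
vertex by a loop at that vertex. -/
def withLoops [Fintype V] (H : PGConfig V k) : Multiset (Sym2 V) :=
  undirected H + Finset.univ.val.bind fun v => Multiset.replicate (H.pebs v).card s(v, v)

end PebbleGame
open PebbleGame

namespace PebbleGame

set_option linter.unusedSectionVars false
set_option maxHeartbeats 1000000

variable {V : Type} [DecidableEq V] {k ℓ : ℕ}

/-- the safe-slide relation from the goal -/
def SafeRel (k : ℕ) (A B : PGConfig V k) : Prop :=
  SlideRel k A B ∧ ∀ i : Fin k, HasCycle (monoEdges B i) → HasCycle (monoEdges A i)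

def SafeStar (k : ℕ) : PGConfig V k → PGConfig V k → Prop :=
  Relation.ReflTransGen (SafeRel k)

/-- classical count of elements satisfying a predicate -/
noncomputable def cnt {α : Type*} (p : α → Prop) (s : Multiset α) : ℕ :=
  @Multiset.countP α p (fun a => Classical.propDecidable (p a)) s

lemma cnt_spec {α : Type*} (p : α → Prop) [inst : DecidablePred p] (s : Multiset α) :
    Multiset.countP p s = cnt p s :=
  @Multiset.countP_congr _ s s rfl p p inst (fun a => Classical.propDecidable (p a))
    (fun _ _ => rfl)

lemma cnt_cons {α : Type*} (p : α → Prop) (a : α) (s : Multiset α) :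
    cnt p (a ::ₘ s) = cnt p s + (if p a then 1 else 0) := by
  unfold cnt
  rw [Multiset.countP_cons]

lemma cnt_zero {α : Type*} (p : α → Prop) : cnt p (0 : Multiset α) = 0 := rfl

lemma cnt_pos {α : Type*} {p : α → Prop} {s : Multiset α} :
    0 < cnt p s ↔ ∃ a ∈ s, p a := by
  unfold cnt
  exact Multiset.countP_pos

lemma cnt_eq_zero {α : Type*} {p : α → Prop} {s : Multiset α} :
    cnt p s = 0 ↔ ∀ a ∈ s, ¬ p a := by
  unfold cnt
  exact Multiset.countP_eq_zero

lemma cnt_congr {α : Type*} {p q : α → Prop} {s : Multiset α}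
    (h : ∀ a ∈ s, p a ↔ q a) : cnt p s = cnt q s :=
  Multiset.countP_congr rfl (fun a ha => propext (h a ha))

lemma cnt_filter_card {α : Type*} (p : α → Prop) [DecidablePred p] (s : Multiset α) :
    (s.filter p).card = cnt p s := by
  rw [← Multiset.countP_eq_card_filter]
  exact cnt_spec p s

lemma cnt_map {α β : Type*} (f : α → β) (s : Multiset α) (p : β → Prop) :
    cnt p (s.map f) = cnt (fun a => p (f a)) s := by
  unfold cnt
  rw [Multiset.countP_map, ← Multiset.countP_eq_card_filter]

lemma cnt_split {α : Type*} (s : Multiset α) (p q : α → Prop) :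
    cnt p s = cnt (fun a => p a ∧ q a) s + cnt (fun a => p a ∧ ¬ q a) s := by
  induction s using Multiset.induction with
  | empty => simp [cnt_zero]
  | cons a s ih =>
    rw [cnt_cons, cnt_cons, cnt_cons, ih]
    by_cases h : p a <;> by_cases h2 : q a <;>
      simp [h, h2] <;> omega

lemma cnt_eq_sum_fiber {α β : Type*} [Fintype β] [DecidableEq β]
    (E : Multiset α) (p : α → Prop) (f : α → β) :
    cnt p E = ∑ b ∈ Finset.univ, cnt (fun e => p e ∧ f e = b) E := by
  induction E using Multiset.induction with
  | empty => simp [cnt_zero]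
  | cons a s ih =>
    simp only [cnt_cons, ih, Finset.sum_add_distrib]
    congr 1
    by_cases h : p a
    · rw [if_pos h]
      refine ((Finset.sum_eq_single_of_mem (f a) (Finset.mem_univ _)
        (fun b _ hb => if_neg (fun he => hb he.2.symm))).trans (if_pos ⟨h, rfl⟩)).symm
    · rw [if_neg h]
      exact (Finset.sum_eq_zero (fun b _ => if_neg (fun he => h he.1))).symm

lemma cnt_mem_eq_sum {α : Type*} (E : Multiset α) (f : α → V) (R : Finset V) :
    cnt (fun e => f e ∈ R) E = ∑ x ∈ R, cnt (fun e => f e = x) E := by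
  induction E using Multiset.induction with
  | empty => simp [cnt_zero]
  | cons a s ih =>
    simp only [cnt_cons, ih, Finset.sum_add_distrib]
    congr 1
    by_cases h : f a ∈ R
    · rw [if_pos h]
      refine ((Finset.sum_eq_single_of_mem (f a) h
        (fun b _ hb => if_neg (fun he => hb he.symm))).trans (if_pos rfl)).symm
    · rw [if_neg h]
      exact (Finset.sum_eq_zero (fun x hx => if_neg (fun (he : f a = x) => h (he ▸ hx)))).symm

lemma two_le_cnt {α : Type*} [DecidableEq α] {s : Multiset α} {p : α → Prop} {a b : α}
    (ha : a ∈ s) (hb : b ∈ s) (hab : a ≠ b) (hpa : p a) (hpb : p b) :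
    2 ≤ cnt p s := by
  have hb' : b ∈ s.erase a := (Multiset.mem_erase_of_ne hab.symm).mpr hb
  have h1 : 0 < cnt p (s.erase a) := cnt_pos.mpr ⟨b, hb', hpb⟩
  have h2 : cnt p s = cnt p (s.erase a) + 1 := by
    conv_lhs => rw [← Multiset.cons_erase ha]
    rw [cnt_cons, if_pos hpa]
  omega

noncomputable def odeg (C : PGConfig V k) (x : V) (i : Fin k) : ℕ :=
  cnt (fun e => e.1 = x ∧ e.2.2 = i) C.edges

noncomputable def odegT (C : PGConfig V k) (x : V) : ℕ :=
  cnt (fun e => e.1 = x) C.edges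

lemma monoEdges_def (C : PGConfig V k) (i : Fin k) :
    monoEdges C i = monoOf C.edges i := rfl

lemma monoOf_cons (e : V × V × Fin k) (E : Multiset (V × V × Fin k)) (i : Fin k) :
    monoOf (e ::ₘ E) i
      = (if e.2.2 = i then {s(e.1, e.2.1)} else 0) + monoOf E i := by
  simp only [monoOf, Multiset.filter_cons, Multiset.map_add,
    apply_ite (Multiset.map (fun e : V × V × Fin k => s(e.1, e.2.1)))]
  simp

lemma monoOf_erase {E : Multiset (V × V × Fin k)} {e : V × V × Fin k} (he : e ∈ E) (i : Fin k) :
    (if e.2.2 = i then {s(e.1, e.2.1)} else 0) + monoOf (E.erase e) i = monoOf E i := by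
  conv_rhs => rw [← Multiset.cons_erase he]
  rw [monoOf_cons]

lemma monoOf_erase_le (E : Multiset (V × V × Fin k)) (e : V × V × Fin k) (i : Fin k) :
    monoOf (E.erase e) i ≤ monoOf E i :=
  Multiset.map_le_map (Multiset.filter_le_filter _ (Multiset.erase_le _ _))

lemma hasCycle_mono {F F' : Multiset (Sym2 V)} (h : F ≤ F') : HasCycle F → HasCycle F' := by
  rintro ⟨S, hS, hc⟩
  exact ⟨S, hS, hc.trans (Multiset.card_le_card (Multiset.filter_le_filter _ h))⟩

lemma conn_symm {F : Multiset (Sym2 V)} : Symmetric (Conn F) := by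
  have hadj : Symmetric fun a b : V => s(a, b) ∈ F := by
    intro a b h
    show s(b, a) ∈ F
    rwa [Sym2.eq_swap]
  haveI : Std.Symm (fun a b : V => s(a, b) ∈ F) := ⟨fun a b h => hadj h⟩
  exact fun a b h => (Relation.ReflTransGen.symmetric (α := V)).symm a b h

lemma spanned_split {F : Multiset (Sym2 V)} {S Sa Sb : Finset V}
    (hmem : ∀ e ∈ F, e ∈ S.sym2 → (e ∈ Sa.sym2 ∨ e ∈ Sb.sym2))
    (hsub1 : ∀ e : Sym2 V, e ∈ Sa.sym2 → e ∈ S.sym2)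
    (hsub2 : ∀ e : Sym2 V, e ∈ Sb.sym2 → e ∈ S.sym2)
    (hdisj : ∀ e : Sym2 V, ¬ (e ∈ Sa.sym2 ∧ e ∈ Sb.sym2)) :
    (spanned F S).card = (spanned F Sa).card + (spanned F Sb).card := by
  induction F using Multiset.induction with
  | empty => simp [spanned]
  | cons a s ihF =>
    have iha := ihF (fun e he => hmem e (Multiset.mem_cons_of_mem he))
    simp only [spanned, Multiset.filter_cons] at iha ⊢
    by_cases h1 : a ∈ S.sym2
    · rcases hmem a (Multiset.mem_cons_self a s) h1 with h2 | h2
      · have h3 : a ∉ Sb.sym2 := fun hb => hdisj a ⟨h2, hb⟩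
        rw [if_pos h1, if_pos h2, if_neg h3]
        simp only [Multiset.card_add, Multiset.card_singleton, Multiset.card_zero, zero_add]
        omega
      · have h3 : a ∉ Sa.sym2 := fun hb => hdisj a ⟨hb, h2⟩
        rw [if_pos h1, if_pos h2, if_neg h3]
        simp only [Multiset.card_add, Multiset.card_singleton, Multiset.card_zero, zero_add]
        omega
    · have h2 : a ∉ Sa.sym2 := fun h => h1 (hsub1 a h)
      have h3 : a ∉ Sb.sym2 := fun h => h1 (hsub2 a h)
      rw [if_neg h1, if_neg h2, if_neg h3]
      simp only [Multiset.card_add, Multiset.card_zero, zero_add]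
      omega

lemma hasCycle_cons {F : Multiset (Sym2 V)} {a b : V} (hdisc : ¬ Conn F a b) :
    HasCycle (s(a, b) ::ₘ F) → HasCycle F := by
  rintro ⟨S, hSne, hcard⟩
  have hsp : spanned (s(a, b) ::ₘ F) S
      = (if s(a, b) ∈ S.sym2 then {s(a, b)} else 0) + spanned F S := by
    simp [spanned, Multiset.filter_cons]
  by_cases hmem : s(a, b) ∈ S.sym2
  case neg =>
    rw [hsp, if_neg hmem, zero_add] at hcard
    exact ⟨S, hSne, hcard⟩
  case pos =>
  obtain ⟨haS, hbS⟩ := Finset.mk_mem_sym2_iff.mp hmem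
  have hcard' : S.card ≤ (spanned F S).card + 1 := by
    rw [hsp, if_pos hmem] at hcard
    simpa [add_comm] using hcard
  set Sa := S.filter (fun u => Conn F a u) with hSa
  set Sb := S.filter (fun u => ¬ Conn F a u) with hSb
  have hacard : Sa.card + Sb.card = S.card :=
    Finset.card_filter_add_card_filter_not (p := fun u => Conn F a u)
  have haSa : a ∈ Sa := Finset.mem_filter.mpr ⟨haS, Relation.ReflTransGen.refl⟩
  have hbSb : b ∈ Sb := Finset.mem_filter.mpr ⟨hbS, hdisc⟩
  have hkey : (spanned F S).card = (spanned F Sa).card + (spanned F Sb).card := by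
    refine spanned_split ?_ ?_ ?_ ?_
    · intro e heF heS
      revert heS
      induction e using Sym2.inductionOn with
      | hf p q =>
        intro heS
        obtain ⟨hpS, hqS⟩ := Finset.mk_mem_sym2_iff.mp heS
        have hadj : Conn F p q := Relation.ReflTransGen.single heF
        by_cases hcp : Conn F a p
        · left
          rw [Finset.mk_mem_sym2_iff]
          exact ⟨Finset.mem_filter.mpr ⟨hpS, hcp⟩,
            Finset.mem_filter.mpr ⟨hqS, hcp.trans hadj⟩⟩
        · right
          rw [Finset.mk_mem_sym2_iff]
          refine ⟨Finset.mem_filter.mpr ⟨hpS, hcp⟩,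
            Finset.mem_filter.mpr ⟨hqS, fun hcq => hcp (hcq.trans (conn_symm hadj))⟩⟩
    · intro e he
      revert he
      induction e using Sym2.inductionOn with
      | hf p q =>
        intro he
        obtain ⟨h1, h2⟩ := Finset.mk_mem_sym2_iff.mp he
        exact Finset.mk_mem_sym2_iff.mpr
          ⟨(Finset.mem_filter.mp h1).1, (Finset.mem_filter.mp h2).1⟩
    · intro e he
      revert he
      induction e using Sym2.inductionOn with
      | hf p q =>
        intro he
        obtain ⟨h1, h2⟩ := Finset.mk_mem_sym2_iff.mp he
        exact Finset.mk_mem_sym2_iff.mpr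
          ⟨(Finset.mem_filter.mp h1).1, (Finset.mem_filter.mp h2).1⟩
    · intro e he
      obtain ⟨h1, h2⟩ := he
      revert h1 h2
      induction e using Sym2.inductionOn with
      | hf p q =>
        intro h1 h2
        obtain ⟨hp1, -⟩ := Finset.mk_mem_sym2_iff.mp h1
        obtain ⟨hp2, -⟩ := Finset.mk_mem_sym2_iff.mp h2
        exact (Finset.mem_filter.mp hp2).2 (Finset.mem_filter.mp hp1).2
  by_cases hA : Sa.card ≤ (spanned F Sa).card
  · exact ⟨Sa, ⟨a, haSa⟩, hA⟩
  by_cases hB : Sb.card ≤ (spanned F Sb).card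
  · exact ⟨Sb, ⟨b, hbSb⟩, hB⟩
  exfalso
  have hca : 0 < Sa.card := Finset.card_pos.mpr ⟨a, haSa⟩
  have hcb : 0 < Sb.card := Finset.card_pos.mpr ⟨b, hbSb⟩
  omega

lemma step_inv {B C : PGConfig V k} (hstep : Step k ℓ B C)
    (ih : ∀ x i, (B.pebs x).count i + odeg B x i = 1) (x : V) (i : Fin k) :
    (C.pebs x).count i + odeg C x i = 1 := by
  have hcee : ∀ (s : Multiset (Fin k)) (j j' : Fin k),
      (s.erase j').count j = s.count j - (if j = j' then 1 else 0) := by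
    intro s j j'
    rcases eq_or_ne j j' with rfl | h
    · simp [Multiset.count_erase_self]
    · simp [Multiset.count_erase_of_ne h, h]
  cases hstep with
  | add v w c hpeb hc =>
    have hihxi := ih x i
    simp only [odeg] at hihxi ⊢
    have hcnt : 1 ≤ (B.pebs v).count c := Multiset.one_le_count_iff_mem.mpr hc
    show (Function.update B.pebs v ((B.pebs v).erase c) x).count i
        + cnt _ ((v, w, c) ::ₘ B.edges) = 1
    rw [cnt_cons]
    rcases eq_or_ne x v with rfl | hxv
    · rw [Function.update_self, hcee]
      rcases eq_or_ne i c with rfl | hic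
      · rw [if_pos rfl, if_pos (⟨rfl, rfl⟩ : (x, w, i).1 = x ∧ (x, w, i).2.2 = i)]
        omega
      · rw [if_neg hic, if_neg (fun h => hic h.2.symm)]
        omega
    · rw [Function.update_of_ne hxv, if_neg (fun h => hxv h.1.symm)]
      omega
  | slide v w c c' he hc =>
    have hihxi := ih x i
    simp only [odeg] at hihxi ⊢
    have hcnt : 1 ≤ (B.pebs w).count c' := Multiset.one_le_count_iff_mem.mpr hc
    show (Function.update (Function.update B.pebs w ((B.pebs w).erase c')) v
        (c ::ₘ Function.update B.pebs w ((B.pebs w).erase c') v) x).count i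
        + cnt _ ((w, v, c') ::ₘ B.edges.erase (v, w, c)) = 1
    rw [cnt_cons]
    have hsplit := cnt_cons (fun e => e.1 = x ∧ e.2.2 = i) (v, w, c) (B.edges.erase (v, w, c))
    rw [Multiset.cons_erase he] at hsplit
    rcases eq_or_ne x v with rfl | hxv
    · rw [Function.update_self, Multiset.count_cons]
      rcases eq_or_ne x w with rfl | hxw
      · rw [Function.update_self, hcee]
        rcases eq_or_ne i c with rfl | hic <;> rcases eq_or_ne i c' with rfl | hic'
        · try rw [if_pos (show ((x:V), x, i).1 = x ∧ ((x:V), x, i).2.2 = i from ⟨rfl, rfl⟩)] at hsplit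
          try rw [if_pos (show ((x:V), x, i).1 = x ∧ ((x:V), x, i).2.2 = i from ⟨rfl, rfl⟩)]
          try rw [if_pos (rfl : i = i)]
          try rw [if_pos (rfl : i = i)]
          omega
        · try rw [if_pos (show ((x:V), x, i).1 = x ∧ ((x:V), x, i).2.2 = i from ⟨rfl, rfl⟩)] at hsplit
          try rw [if_neg (show ¬ (((x:V), x, c').1 = x ∧ ((x:V), x, c').2.2 = i) from fun h => hic' h.2.symm)]
          try rw [if_pos (rfl : i = i)]
          try rw [if_neg hic']
          omega
        · try rw [if_neg (show ¬ (((x:V), x, c).1 = x ∧ ((x:V), x, c).2.2 = i) from fun h => hic h.2.symm)] at hsplit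
          try rw [if_pos (show ((x:V), x, i).1 = x ∧ ((x:V), x, i).2.2 = i from ⟨rfl, rfl⟩)]
          try rw [if_neg hic]
          try rw [if_pos (rfl : i = i)]
          omega
        · try rw [if_neg (show ¬ (((x:V), x, c).1 = x ∧ ((x:V), x, c).2.2 = i) from fun h => hic h.2.symm)] at hsplit
          try rw [if_neg (show ¬ (((x:V), x, c').1 = x ∧ ((x:V), x, c').2.2 = i) from fun h => hic' h.2.symm)]
          try rw [if_neg hic]
          try rw [if_neg hic']
          omega
      · rw [Function.update_of_ne hxw]
        try rw [if_neg (show ¬ (((w:V), x, c').1 = x ∧ ((w:V), x, c').2.2 = i) from fun h => hxw h.1.symm)]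
        rcases eq_or_ne i c with rfl | hic
        · try rw [if_pos (show ((x:V), w, i).1 = x ∧ ((x:V), w, i).2.2 = i from ⟨rfl, rfl⟩)] at hsplit
          try rw [if_pos (rfl : i = i)]
          omega
        · try rw [if_neg (show ¬ (((x:V), w, c).1 = x ∧ ((x:V), w, c).2.2 = i) from fun h => hic h.2.symm)] at hsplit
          try rw [if_neg hic]
          omega
    · rw [Function.update_of_ne hxv]
      try rw [if_neg (show ¬ (((v:V), w, c).1 = x ∧ ((v:V), w, c).2.2 = i) from fun h => hxv h.1.symm)] at hsplit
      rcases eq_or_ne x w with rfl | hxw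
      · rw [Function.update_self, hcee]
        rcases eq_or_ne i c' with rfl | hic'
        · try rw [if_pos (show ((x:V), v, i).1 = x ∧ ((x:V), v, i).2.2 = i from ⟨rfl, rfl⟩)]
          try rw [if_pos (rfl : i = i)]
          omega
        · try rw [if_neg (show ¬ (((x:V), v, c').1 = x ∧ ((x:V), v, c').2.2 = i) from fun h => hic' h.2.symm)]
          try rw [if_neg hic']
          omega
      · rw [Function.update_of_ne hxw]
        try rw [if_neg (show ¬ (((w:V), v, c').1 = x ∧ ((w:V), v, c').2.2 = i) from fun h => hxw h.1.symm)]
        omega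

lemma reachable_inv [Fintype V] {C : PGConfig V k} (h : Reachable k ℓ C) (x : V) (i : Fin k) :
    (C.pebs x).count i + odeg C x i = 1 := by
  revert x i
  induction h with
  | refl =>
    intro x i
    simp [initCfg, odeg, cnt_zero, Multiset.count_univ]
  | tail _ hstep ih => exact step_inv hstep ih

lemma pcard_odegT [Fintype V] {C : PGConfig V k} (h : Reachable k ℓ C) (x : V) :
    (C.pebs x).card + odegT C x = k := by
  have h2 : ∑ i ∈ Finset.univ, ((C.pebs x).count i + odeg C x i) = k := by
    simp [reachable_inv h x]
  rw [Finset.sum_add_distrib] at h2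
  have h3 : ∑ i ∈ Finset.univ, (C.pebs x).count i = (C.pebs x).card := by
    rw [← Multiset.toFinset_sum_count_eq]
    exact (Finset.sum_subset (Finset.subset_univ _) (fun y _ hy =>
      Multiset.count_eq_zero_of_notMem (by simpa using hy))).symm
  have h4 : ∑ i ∈ Finset.univ, odeg C x i = odegT C x := by
    simp only [odeg, odegT]
    exact (cnt_eq_sum_fiber C.edges (fun e => e.1 = x) (fun e => e.2.2)).symm
  rw [h3, h4] at h2
  exact h2

lemma slideRel_step {A B : PGConfig V k} (h : SlideRel k A B) : Step k ℓ A B := by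
  obtain ⟨v, w, c, c', he, hc, rfl⟩ := h
  exact Step.slide _ v w c c' he hc

lemma safeStar_reachable [Fintype V] {A B : PGConfig V k} (hA : Reachable k ℓ A)
    (h : SafeStar k A B) : Reachable k ℓ B := by
  induction h with
  | refl => exact hA
  | tail _ hstep ih => exact ih.tail (slideRel_step hstep.1)

lemma slides_reachable [Fintype V] {A B : PGConfig V k} (hA : Reachable k ℓ A)
    (h : Relation.ReflTransGen (SlideRel k) A B) : Reachable k ℓ B := by
  induction h with
  | refl => exact hA
  | tail _ hstep ih => exact ih.tail (slideRel_step hstep)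

lemma undirected_slide {A : PGConfig V k} {v w : V} {c c' : Fin k} (he : (v, w, c) ∈ A.edges) :
    undirected (slideCfg A v w c c') = undirected A := by
  show Multiset.map _ ((w, v, c') ::ₘ A.edges.erase (v, w, c)) = undirected A
  conv_rhs => rw [undirected, ← Multiset.cons_erase he]
  rw [Multiset.map_cons, Multiset.map_cons]
  congr 1
  exact Sym2.eq_swap

lemma safeStar_undirected {A B : PGConfig V k} (h : SafeStar k A B) :
    undirected B = undirected A := by
  induction h with
  | refl => rfl
  | tail _ hstep ih =>
    obtain ⟨⟨v, w, c, c', he, hc, rfl⟩, -⟩ := hstep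
    rw [undirected_slide he]
    exact ih

lemma pcard_slide {B : PGConfig V k} {a b : V} (c c' : Fin k) (hab : a ≠ b)
    (hc' : c' ∈ B.pebs b) (z : V) :
    ((slideCfg B a b c c').pebs z).card + (if z = b then 1 else 0)
      = (B.pebs z).card + (if z = a then 1 else 0) := by
  have hcard : 0 < (B.pebs b).card := Multiset.card_pos.mpr fun h0 => by simp [h0] at hc'
  simp only [slideCfg]
  rcases eq_or_ne z a with rfl | hza
  · rw [Function.update_self, Function.update_of_ne hab]
    simp [hab]
  · rw [Function.update_of_ne hza]
    rcases eq_or_ne z b with rfl | hzb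
    · rw [Function.update_self, Multiset.card_erase_of_mem hc', Nat.pred_eq_sub_one]
      simp only [if_neg hza, eq_self_iff_true, if_true]
      omega
    · rw [Function.update_of_ne hzb]
      simp [hza, hzb]

lemma pcard_slide_loop {B : PGConfig V k} {a : V} (c c' : Fin k)
    (hc' : c' ∈ B.pebs a) (z : V) :
    ((slideCfg B a a c c').pebs z).card = (B.pebs z).card := by
  have hcard : 0 < (B.pebs a).card := Multiset.card_pos.mpr fun h0 => by simp [h0] at hc'
  simp only [slideCfg]
  rcases eq_or_ne z a with rfl | hza
  · rw [Function.update_self, Function.update_self]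
    rw [Multiset.card_cons, Multiset.card_erase_of_mem hc', Nat.pred_eq_sub_one]
    omega
  · rw [Function.update_of_ne hza, Function.update_of_ne hza]

lemma monoEdges_slide_same {B : PGConfig V k} {a b : V} {c'' : Fin k}
    (he : (a, b, c'') ∈ B.edges) (i : Fin k) :
    monoEdges (slideCfg B a b c'' c'') i = monoEdges B i := by
  rw [monoEdges_def, monoEdges_def]
  show monoOf ((b, a, c'') ::ₘ B.edges.erase (a, b, c'')) i = _
  rw [monoOf_cons, ← monoOf_erase he i]
  congr 1
  split <;> simp [Sym2.eq_swap]

/-- directed chains: list of vertices from `x` to `y`, consecutive pairs related. -/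
inductive DChain (R : V → V → Prop) : V → V → List V → Prop
  | single (x : V) : DChain R x x [x]
  | cons {x y z : V} {l : List V} (hxy : R x y) (h : DChain R y z l) : DChain R x z (x :: l)

namespace DChain

lemma head_eq {R : V → V → Prop} {x y : V} {L : List V} (h : DChain R x y L) :
    ∃ l, L = x :: l := by
  cases h with
  | single => exact ⟨[], rfl⟩
  | cons hxy h => exact ⟨_, rfl⟩

lemma ne_nil {R : V → V → Prop} {x y : V} {L : List V} (h : DChain R x y L) : L ≠ [] := by
  obtain ⟨l, rfl⟩ := h.head_eq
  simp

lemma head_mem {R : V → V → Prop} {x y : V} {L : List V} (h : DChain R x y L) : x ∈ L := by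
  obtain ⟨l, rfl⟩ := h.head_eq
  exact List.mem_cons_self

lemma last_mem {R : V → V → Prop} {x y : V} {L : List V} (h : DChain R x y L) : y ∈ L := by
  induction h with
  | single x => exact List.mem_cons_self
  | cons hxy h ih => exact List.mem_cons_of_mem _ ih

lemma append_single {R : V → V → Prop} {x y u : V} {L : List V}
    (h : DChain R x y L) (hyu : R y u) : DChain R x u (L ++ [u]) := by
  induction h with
  | single x => exact .cons hyu (.single u)
  | cons hxy h ih => exact .cons hxy (ih hyu)

lemma cons_inv {R : V → V → Prop} {x z a : V} {l : List V} (h : DChain R x z (a :: l)) :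
    x = a ∧ (l = [] ∧ z = a ∨ ∃ y, R a y ∧ DChain R y z l) := by
  cases h with
  | single => exact ⟨rfl, Or.inl ⟨rfl, rfl⟩⟩
  | cons hxy h' => exact ⟨rfl, Or.inr ⟨_, hxy, h'⟩⟩

lemma append_right {R : V → V → Prop} {x z b : V} {A B' : List V}
    (h : DChain R x z (A ++ b :: B')) :
    DChain R b z (b :: B') ∧ DChain R x b (A ++ [b]) := by
  induction A generalizing x with
  | nil =>
    rw [List.nil_append] at h
    obtain ⟨l, hl⟩ := h.head_eq
    obtain ⟨h1, h2⟩ := List.cons.inj hl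
    subst h1
    exact ⟨h, by simpa using DChain.single b⟩
  | cons a A' ih =>
    rw [List.cons_append] at h
    obtain ⟨rfl, h2⟩ := cons_inv h
    rcases h2 with ⟨hnil, -⟩ | ⟨y, hxy, h'⟩
    · exact absurd hnil (by simp)
    · obtain ⟨h1, h2⟩ := ih h'
      exact ⟨h1, .cons hxy h2⟩

lemma mono_on {R R' : V → V → Prop} {x y : V} {L : List V} (h : DChain R x y L)
    (hRR : ∀ a b, a ∈ L → b ∈ L → R a b → R' a b) : DChain R' x y L := by
  induction h with
  | single x => exact .single x
  | cons hxy h ih =>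
    exact .cons
      (hRR _ _ (List.mem_cons_self) (List.mem_cons_of_mem _ h.head_mem) hxy)
      (ih fun a b ha hb => hRR a b (List.mem_cons_of_mem _ ha) (List.mem_cons_of_mem _ hb))

lemma mono_on' {R R' : V → V → Prop} {x y : V} {L : List V} (h : DChain R x y L)
    (hRR : ∀ a b, a ∈ L.dropLast → R a b → R' a b) : DChain R' x y L := by
  induction h with
  | single x => exact .single x
  | @cons x y z l hxy h ih =>
    obtain ⟨l', rfl⟩ := h.head_eq
    have hdl : (x :: y :: l').dropLast = x :: (y :: l').dropLast := rfl
    refine .cons (hRR _ _ (by rw [hdl]; exact List.mem_cons_self) hxy)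
      (ih fun a b ha => hRR a b (by rw [hdl]; exact List.mem_cons_of_mem _ ha))

lemma last_step {R : V → V → Prop} {x z : V} {L : List V} (h : DChain R x z L) :
    x = z ∨ ∃ u, u ∈ L ∧ R u z := by
  induction h with
  | single x => exact Or.inl rfl
  | cons hxy h ih =>
    rcases ih with rfl | ⟨u, hu, hR⟩
    · exact Or.inr ⟨_, List.mem_cons_self, hxy⟩
    · exact Or.inr ⟨u, List.mem_cons_of_mem _ hu, hR⟩

lemma conn_head {R : V → V → Prop} {F : Multiset (Sym2 V)}
    (hR : ∀ a b, R a b → s(a, b) ∈ F) {x y : V} {L : List V} (h : DChain R x y L) :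
    ∀ z ∈ L, Conn F x z := by
  induction h with
  | single x =>
    intro z hz
    rw [List.mem_singleton] at hz
    subst hz
    exact Relation.ReflTransGen.refl
  | cons hxy h ih =>
    intro z hz
    rcases List.mem_cons.mp hz with rfl | hz
    · exact Relation.ReflTransGen.refl
    · exact (Relation.ReflTransGen.single (hR _ _ hxy)).trans (ih z hz)

end DChain

lemma rtg_dchain {R : V → V → Prop} {v w : V} (h : Relation.ReflTransGen R v w) :
    ∃ L, DChain R v w L ∧ L.Nodup := by
  induction h with
  | refl => exact ⟨[v], .single v, List.nodup_singleton v⟩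
  | @tail b c _ hbc ih =>
    obtain ⟨L, hL, hnd⟩ := ih
    by_cases hcL : c ∈ L
    · obtain ⟨A, B', rfl⟩ := List.append_of_mem hcL
      refine ⟨A ++ [c], (hL.append_right).2, hnd.sublist ?_⟩
      exact ((List.nil_sublist B').cons₂ c).append_left A
    · refine ⟨L ++ [c], hL.append_single hbc, ?_⟩
      simp [List.nodup_append, hnd, hcL]
      exact fun a ha h => hcL (h ▸ ha)

lemma struct {C : PGConfig V k}
    (hinv : ∀ x i, (C.pebs x).count i + odeg C x i = 1)
    {x : V} {c'' : Fin k} (hx : c'' ∈ C.pebs x) {y : V}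
    (hconn : Conn (monoOf C.edges c'') y x) :
    ∃ L, DChain (fun a b => (b, a, c'') ∈ C.edges) x y L ∧ L.Nodup := by
  have hxcnt : 1 ≤ (C.pebs x).count c'' := Multiset.one_le_count_iff_mem.mpr hx
  have hxod : odeg C x c'' = 0 := by have := hinv x c''; omega
  induction hconn using Relation.ReflTransGen.head_induction_on with
  | refl => exact ⟨[x], .single x, List.nodup_singleton x⟩
  | @head y₀ z h' h ih =>
    obtain ⟨L, hL, hnd⟩ := ih
    have hE : (y₀, z, c'') ∈ C.edges ∨ (z, y₀, c'') ∈ C.edges := by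
      obtain ⟨e, he, hee⟩ := Multiset.mem_map.mp h'
      obtain ⟨heE, hec⟩ := Multiset.mem_filter.mp he
      obtain ⟨ea, eb, ec⟩ := e
      simp only at hec hee
      subst hec
      rcases Sym2.eq_iff.mp hee with ⟨h1, h2⟩ | ⟨h1, h2⟩
      · left; rw [← h1, ← h2]; exact heE
      · right; rw [← h1, ← h2]; exact heE
    rcases hE with heE | heE
    · -- edge (y₀, z, c'') ∈ C.edges
      by_cases hyL : y₀ ∈ L
      · obtain ⟨A, B', rfl⟩ := List.append_of_mem hyL
        exact ⟨A ++ [y₀], (hL.append_right).2,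
          hnd.sublist (((List.nil_sublist B').cons₂ y₀).append_left A)⟩
      · exact ⟨L ++ [y₀], hL.append_single heE, by simp [List.nodup_append, hnd, hyL]; exact fun a ha h => hyL (h ▸ ha)⟩
    · -- edge (z, y₀, c'') ∈ C.edges
      have hzod : 1 ≤ odeg C z c'' := by
        rw [odeg]
        exact cnt_pos.mpr ⟨(z, y₀, c''), heE, ⟨rfl, rfl⟩⟩
      have hzx : z ≠ x := fun h0 => by rw [h0, hxod] at hzod; omega
      rcases hL.last_step with h0 | ⟨u, huL, hu⟩
      · exact absurd h0.symm hzx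
      · -- hu : (z, u, c'') ∈ C.edges
        have hyu : y₀ = u := by
          by_contra hne
          have hneq : (z, y₀, c'') ≠ (z, u, c'') := by simp [hne]
          have h2le : 2 ≤ odeg C z c'' := by
            rw [odeg]
            exact two_le_cnt heE hu hneq ⟨rfl, rfl⟩ ⟨rfl, rfl⟩
          have := hinv z c''
          omega
        have hyL : y₀ ∈ L := by rw [hyu]; exact huL
        obtain ⟨A, B', rfl⟩ := List.append_of_mem hyL
        exact ⟨A ++ [y₀], (hL.append_right).2,
          hnd.sublist (((List.nil_sublist B').cons₂ y₀).append_left A)⟩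

lemma exists_dpath [Fintype V] {A B : PGConfig V k}
    (hund : undirected A = undirected B)
    (hdeg : ∀ x, odegT A x = odegT B x)
    {v w : V} {c : Fin k} (he : (v, w, c) ∈ A.edges) :
    Relation.ReflTransGen (fun a b => ∃ γ, (a, b, γ) ∈ B.edges) v w := by
  by_contra hw
  set D := fun a b : V => ∃ γ : Fin k, (a, b, γ) ∈ B.edges with hD
  set R : Finset V := Finset.univ.filter (fun u => Relation.ReflTransGen D v u) with hR
  have hvR : v ∈ R := by
    simp only [hR, Finset.mem_filter, Finset.mem_univ, true_and]
    exact Relation.ReflTransGen.refl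
  have hwR : w ∉ R := by
    simp only [hR, Finset.mem_filter, Finset.mem_univ, true_and]
    exact hw
  have hclose : ∀ e ∈ B.edges, e.1 ∈ R → e.2.1 ∈ R := by
    intro e heB h1
    simp only [hR, Finset.mem_filter, Finset.mem_univ, true_and] at h1 ⊢
    refine h1.tail ⟨e.2.2, ?_⟩
    simpa using heB
  have htails : cnt (fun e => e.1 ∈ R) A.edges = cnt (fun e => e.1 ∈ R) B.edges := by
    rw [cnt_mem_eq_sum A.edges (fun e => e.1) R, cnt_mem_eq_sum B.edges (fun e => e.1) R]
    exact Finset.sum_congr rfl fun u _ => hdeg u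
  have hboth : ∀ X : PGConfig V k,
      cnt (fun e => e.1 ∈ R ∧ e.2.1 ∈ R) X.edges
        = cnt (fun s => s ∈ R.sym2) (undirected X) := by
    intro X
    rw [undirected, cnt_map]
    refine cnt_congr fun e heX => ?_
    rw [Finset.mk_mem_sym2_iff]
  have hbothAB : cnt (fun e => e.1 ∈ R ∧ e.2.1 ∈ R) A.edges
      = cnt (fun e => e.1 ∈ R ∧ e.2.1 ∈ R) B.edges := by
    rw [hboth A, hboth B, hund]
  have hsplitA := cnt_split A.edges (fun e => e.1 ∈ R) (fun e => e.2.1 ∈ R)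
  have hsplitB := cnt_split B.edges (fun e => e.1 ∈ R) (fun e => e.2.1 ∈ R)
  have hBzero : cnt (fun e => e.1 ∈ R ∧ ¬ e.2.1 ∈ R) B.edges = 0 := by
    rw [cnt_eq_zero]
    rintro e heB ⟨h1, h2⟩
    exact h2 (hclose e heB h1)
  have hApos : 0 < cnt (fun e => e.1 ∈ R ∧ ¬ e.2.1 ∈ R) A.edges :=
    cnt_pos.mpr ⟨(v, w, c), he, ⟨hvR, hwR⟩⟩
  omega

lemma rev {c'' : Fin k} :
    ∀ (L : List V) (B : PGConfig V k) (x y : V),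
      DChain (fun a b => (b, a, c'') ∈ B.edges) x y L → L.Nodup → c'' ∈ B.pebs x →
      ∃ B' : PGConfig V k,
        SafeStar k B B' ∧
        (∀ i, monoEdges B' i = monoEdges B i) ∧
        c'' ∈ B'.pebs y ∧
        (∀ z, (B'.pebs z).card + (if z = x then 1 else 0)
            = (B.pebs z).card + (if z = y then 1 else 0)) ∧
        (∀ e ∈ B.edges, e.1 ∉ L → e ∈ B'.edges) := by
  intro L
  induction L with
  | nil =>
    intro B x y hch
    exact absurd rfl hch.ne_nil
  | cons a l ih =>
    intro B x y hch hnd hx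
    obtain ⟨rfl, h2⟩ := hch.cons_inv
    rcases h2 with ⟨rfl, rfl⟩ | ⟨y₁, hxy, h'⟩
    · exact ⟨B, Relation.ReflTransGen.refl, fun i => rfl, hx, fun z => rfl, fun e he _ => he⟩
    · have hy₁l : y₁ ∈ l := h'.head_mem
      have hxl : x ∉ l := (List.nodup_cons.mp hnd).1
      have hxy₁ : x ≠ y₁ := fun h0 => hxl (h0 ▸ hy₁l)
      set B₁ := slideCfg B y₁ x c'' c'' with hB₁
      have hstep : SafeRel k B B₁ :=
        ⟨⟨y₁, x, c'', c'', hxy, hx, rfl⟩,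
          fun i => by rw [monoEdges_slide_same hxy i]; exact id⟩
      have hpebs₁ : c'' ∈ B₁.pebs y₁ := by
        simp [hB₁, slideCfg]
      have hedges₁ : B₁.edges = (x, y₁, c'') ::ₘ B.edges.erase (y₁, x, c'') := rfl
      have h'' : DChain (fun a b => (b, a, c'') ∈ B₁.edges) y₁ y l := by
        refine h'.mono_on fun p q hp hq hpq => ?_
        have hne : (q, p, c'') ≠ (y₁, x, c'') := by
          intro h0
          have hpx : p = x := by
            have := congrArg (fun t : V × V × Fin k => t.2.1) h0
            simpa using this
          exact hxl (hpx ▸ hp)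
        rw [hedges₁]
        exact Multiset.mem_cons_of_mem ((Multiset.mem_erase_of_ne hne).mpr hpq)
      obtain ⟨B', hstar, hmono, hy, hcnt, hsurv⟩ :=
        ih B₁ y₁ y h'' (List.nodup_cons.mp hnd).2 hpebs₁
      refine ⟨B', Relation.ReflTransGen.head hstep hstar, ?_, hy, ?_, ?_⟩
      · intro i
        rw [hmono i, monoEdges_slide_same hxy i]
      · intro z
        have h1 := hcnt z
        have h2 := pcard_slide (B := B) (a := y₁) (b := x) c'' c'' hxy₁.symm hx z
        rw [← hB₁] at h2
        omega
      · intro e heB hetail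
        have h1 : e.1 ∉ l := fun h0 => hetail (List.mem_cons_of_mem _ h0)
        have h2 : e ≠ (y₁, x, c'') := by
          intro h0
          exact h1 (by rw [h0]; exact hy₁l)
        refine hsurv e ?_ h1
        rw [hedges₁]
        exact Multiset.mem_cons_of_mem ((Multiset.mem_erase_of_ne h2).mpr heB)

lemma tr [Fintype V] :
    ∀ (n : ℕ) (B : PGConfig V k) (L : List V), L.length ≤ n → ∀ (v w : V),
      Reachable k ℓ B → DChain (fun a b => ∃ γ, (a, b, γ) ∈ B.edges) v w L → L.Nodup →
      B.pebs w ≠ 0 →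
      ∃ B' : PGConfig V k, SafeStar k B B' ∧ Reachable k ℓ B' ∧
        ∀ z, (B'.pebs z).card + (if z = w then 1 else 0)
            = (B.pebs z).card + (if z = v then 1 else 0) := by
  intro n
  induction n with
  | zero =>
    intro B L hlen v w _ hch
    exact absurd (List.length_eq_zero_iff.mp (Nat.le_zero.mp hlen)) hch.ne_nil
  | succ n ihn =>
    intro B L hlen v w hreach hch hnd hw
    obtain ⟨c'', hc''⟩ := Multiset.exists_mem_of_ne_zero hw
    have hinv := fun x i => reachable_inv hreach x i
    set T : V → Prop := fun u => Conn (monoOf B.edges c'') w u with hT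
    set p : V → Bool := fun u => decide (¬ T u) with hp
    set pre := L.takeWhile p with hpre
    set suf := L.dropWhile p with hsuf
    have hps : pre ++ suf = L := List.takeWhile_append_dropWhile
    have hsufne : suf ≠ [] := by
      intro h0
      have hall := List.dropWhile_eq_nil_iff.mp (hsuf ▸ h0) w hch.last_mem
      simp only [hp] at hall
      exact (of_decide_eq_true hall) Relation.ReflTransGen.refl
    obtain ⟨h₀, rest, hsufeq⟩ : ∃ h₀ rest, suf = h₀ :: rest := by
      cases hs : suf with
      | nil => exact absurd hs hsufne
      | cons a0 b0 => exact ⟨a0, b0, rfl⟩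
    have hpd : ∀ (l : List V) (a0 : V) (l' : List V),
        l.dropWhile p = a0 :: l' → p a0 = false := by
      intro l
      induction l with
      | nil => intro a0 l' h0; simp [List.dropWhile] at h0
      | cons b t iht =>
        intro a0 l' h0
        rw [List.dropWhile_cons] at h0
        by_cases hb : p b = true
        · rw [if_pos hb] at h0
          exact iht a0 l' h0
        · rw [if_neg hb] at h0
          obtain ⟨h1, -⟩ := List.cons.inj h0
          rw [← h1]
          exact Bool.eq_false_iff.mpr hb
    have hTh₀ : T h₀ := by
      have h1 : L.dropWhile p = h₀ :: rest := by rw [← hsuf]; exact hsufeq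
      have h2 := hpd L h₀ rest h1
      by_contra hnT
      have h3 : p h₀ = true := by
        simp only [hp]
        exact decide_eq_true hnT
      rw [h3] at h2
      exact Bool.noConfusion h2
    have hpre_prop : ∀ u ∈ pre, ¬ T u := by
      intro u hu
      have h1 : p u = true := List.mem_takeWhile_imp (hpre ▸ hu)
      simp only [hp] at h1
      exact of_decide_eq_true h1
    have hch' : DChain (fun a b => ∃ γ, (a, b, γ) ∈ B.edges) v w (pre ++ h₀ :: rest) := by
      rw [← hps, hsufeq] at hch
      exact hch
    obtain ⟨hchsuf, hchpre⟩ := hch'.append_right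
    have hconn : Conn (monoOf B.edges c'') h₀ w := conn_symm hTh₀
    obtain ⟨Lq, hLq, hLqnd⟩ := struct hinv hc'' hconn
    have hLqT : ∀ z ∈ Lq, T z := by
      intro z hz
      refine hLq.conn_head (F := monoOf B.edges c'') ?_ z hz
      intro a b hab
      have hm : (b, a, c'') ∈ B.edges.filter (fun e : V × V × Fin k => e.2.2 = c'') :=
        Multiset.mem_filter.mpr ⟨hab, rfl⟩
      have hm2 : s(b, a) ∈ monoOf B.edges c'' :=
        Multiset.mem_map_of_mem (fun e : V × V × Fin k => s(e.1, e.2.1)) hm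
      rwa [Sym2.eq_swap]
    obtain ⟨B₁, hstar₁, hmono₁, hpeb₁, hcnt₁, hsurv₁⟩ := rev Lq B w h₀ hLq hLqnd hc''
    have hreach₁ : Reachable k ℓ B₁ := safeStar_reachable hreach hstar₁
    rcases List.eq_nil_or_concat pre with hpre0 | ⟨pre', u, hpu⟩
    · have hv : v = h₀ := by
        rw [hpre0, List.nil_append] at hchpre
        obtain ⟨l0, hl0⟩ := hchpre.head_eq
        exact ((List.cons.inj hl0).1).symm
      subst hv
      exact ⟨B₁, hstar₁, hreach₁, fun z => hcnt₁ z⟩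
    · rw [List.concat_eq_append] at hpu
      have hchpre2 : DChain (fun a b => ∃ γ, (a, b, γ) ∈ B.edges) v h₀
          (pre' ++ u :: [h₀]) := by
        rw [hpu, List.append_assoc] at hchpre
        exact hchpre
      obtain ⟨hc1, hc2⟩ := hchpre2.append_right
      obtain ⟨-, hstep2⟩ := hc1.cons_inv
      rcases hstep2 with ⟨habs, -⟩ | ⟨y2, hRuy2, hch2⟩
      · exact absurd habs (by simp)
      · have hy2 : h₀ = y2 := by
          obtain ⟨l0, hl0⟩ := hch2.head_eq
          exact (List.cons.inj hl0).1
        subst hy2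
        obtain ⟨γ, hγ⟩ := hRuy2
        have hupre : u ∈ pre := by rw [hpu]; simp
        have huT : ¬ T u := hpre_prop u hupre
        have huLq : u ∉ Lq := fun h0 => huT (hLqT u h0)
        have hγ₁ : (u, h₀, γ) ∈ B₁.edges := hsurv₁ _ hγ huLq
        have huh₀ : u ≠ h₀ := fun h0 => huT (h0 ▸ hTh₀)
        set B₂ := slideCfg B₁ u h₀ γ c'' with hB₂
        have hdisc : ¬ Conn (monoOf B.edges c'') h₀ u := fun hcu =>
          huT (Relation.ReflTransGen.trans hTh₀ hcu)
        have hedges₂ : B₂.edges = (h₀, u, c'') ::ₘ B₁.edges.erase (u, h₀, γ) := rfl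
        have hstep₂ : SafeRel k B₁ B₂ := by
          refine ⟨⟨u, h₀, γ, c'', hγ₁, hpeb₁, rfl⟩, ?_⟩
          intro i hcyc
          rcases eq_or_ne i c'' with rfl | hic
          · have hle : monoEdges B₂ i ≤ s(h₀, u) ::ₘ monoEdges B₁ i := by
              rw [monoEdges_def, hedges₂, monoOf_cons,
                if_pos (rfl : (h₀, u, i).2.2 = i), Multiset.singleton_add]
              exact Multiset.cons_le_cons _
                ((monoOf_erase_le _ _ _).trans (le_of_eq (monoEdges_def B₁ i).symm))
            have hcyc2 := hasCycle_mono hle hcyc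
            have hconn' : ¬ Conn (monoEdges B₁ i) h₀ u := by
              rw [hmono₁ i, monoEdges_def]
              exact hdisc
            exact hasCycle_cons hconn' hcyc2
          · have hle : monoEdges B₂ i ≤ monoEdges B₁ i := by
              rw [monoEdges_def, hedges₂, monoOf_cons,
                if_neg (fun h0 : (h₀, u, c'').2.2 = i => hic h0.symm), zero_add]
              exact (monoOf_erase_le _ _ _).trans (le_of_eq (monoEdges_def B₁ i).symm)
            exact hasCycle_mono hle hcyc
        have hreach₂ : Reachable k ℓ B₂ := hreach₁.tail (slideRel_step hstep₂.1)
        have hpeb₂ : B₂.pebs u ≠ 0 := by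
          rw [hB₂]
          simp only [slideCfg, Function.update_self]
          exact Multiset.cons_ne_zero
        have hcnt₂ := pcard_slide (B := B₁) (a := u) (b := h₀) γ c'' huh₀ hpeb₁
        have hndpre : pre.Nodup :=
          hnd.sublist (by rw [hpre]; exact List.takeWhile_sublist p)
        have hnd' : (pre' ++ [u]).Nodup := hpu ▸ hndpre
        have hupre' : u ∉ pre' := by
          intro h0
          rw [List.nodup_append] at hnd'
          exact hnd'.2.2 u h0 u (List.mem_singleton_self u) rfl
        have hnd'' : (pre' ++ [u]).Nodup := hpu ▸ hndpre
        have hch₂ : DChain (fun a b => ∃ γ', (a, b, γ') ∈ B₂.edges) v u (pre' ++ [u]) := by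
          refine hc2.mono_on' ?_
          rintro a b ha ⟨γ', hab⟩
          rw [List.dropLast_concat] at ha
          have hapre : a ∈ pre := by rw [hpu]; exact List.mem_append_left _ ha
          have haT : ¬ T a := hpre_prop a hapre
          have haLq : a ∉ Lq := fun h0 => haT (hLqT a h0)
          have hab₁ : (a, b, γ') ∈ B₁.edges := hsurv₁ _ hab haLq
          have hne : (a, b, γ') ≠ (u, h₀, γ) := by
            intro h0
            have hau : a = u := by
              have := congrArg (fun t : V × V × Fin k => t.1) h0
              simpa using this
            exact hupre' (hau ▸ ha)
          refine ⟨γ', ?_⟩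
          rw [hedges₂]
          exact Multiset.mem_cons_of_mem ((Multiset.mem_erase_of_ne hne).mpr hab₁)
        have hlen₂ : (pre' ++ [u]).length ≤ n := by
          have h1 : L.length = pre.length + suf.length := by rw [← hps]; simp
          have h2 : 1 ≤ suf.length := by rw [hsufeq]; simp
          have h3 : (pre' ++ [u]).length = pre.length := by rw [← hpu]
          omega
        obtain ⟨B₃, hstar₃, hreach₃, hcnt₃⟩ :=
          ihn B₂ (pre' ++ [u]) hlen₂ v u hreach₂ hch₂ hnd'' hpeb₂
        refine ⟨B₃, hstar₁.trans (Relation.ReflTransGen.head hstep₂ hstar₃), hreach₃, ?_⟩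
        intro z
        have e1 := hcnt₁ z
        have e2 := hcnt₂ z
        rw [← hB₂] at e2
        have e3 := hcnt₃ z
        omega

lemma simulate [Fintype V] {H A : PGConfig V k} (hH : Reachable k ℓ H)
    (hsl : Relation.ReflTransGen (SlideRel k) H A) :
    ∃ B : PGConfig V k, SafeStar k H B ∧ Reachable k ℓ B ∧
      undirected B = undirected A ∧ ∀ z, (B.pebs z).card = (A.pebs z).card := by
  induction hsl with
  | refl => exact ⟨H, Relation.ReflTransGen.refl, hH, rfl, fun z => rfl⟩
  | @tail A A' hsl' hstep ih =>
    obtain ⟨B, hstar, hreachB, hund, hcnt⟩ := ih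
    have hreachA : Reachable k ℓ A := slides_reachable hH hsl'
    obtain ⟨v₀, w₀, c, c', he, hc, rfl⟩ := hstep
    have hundA' : undirected (slideCfg A v₀ w₀ c c') = undirected A := undirected_slide he
    rcases eq_or_ne v₀ w₀ with rfl | hvw
    · refine ⟨B, hstar, hreachB, ?_, ?_⟩
      · rw [hundA']
        exact hund
      · intro z
        rw [hcnt z, pcard_slide_loop c c' hc z]
    · have hdeg : ∀ x, odegT A x = odegT B x := by
        intro x
        have h1 := pcard_odegT hreachA x
        have h2 := pcard_odegT hreachB x
        have h3 := hcnt x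
        omega
      have hrtg := exists_dpath hund.symm hdeg he
      obtain ⟨L, hch, hnd⟩ := rtg_dchain hrtg
      have hpw : B.pebs w₀ ≠ 0 := by
        intro h0
        have h1 := hcnt w₀
        rw [h0] at h1
        simp only [Multiset.card_zero] at h1
        have h2 : 0 < (A.pebs w₀).card :=
          Multiset.card_pos.mpr fun hz => by simp [hz] at hc
        omega
      obtain ⟨B', hstar', hreach', hcnt'⟩ :=
        tr L.length B L le_rfl v₀ w₀ hreachB hch hnd hpw
      refine ⟨B', hstar.trans hstar', hreach', ?_, ?_⟩
      · rw [safeStar_undirected hstar', hund, hundA']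
      · intro z
        have e1 := hcnt' z
        have e2 := hcnt z
        have e3 := pcard_slide c c' hvw hc z
        omega

end PebbleGame

/-- the canonical pebble-slide move: any sequence of pebble-slide moves
from a reachable configuration that makes a given add-edge move possible (collects at
least `ℓ+1` pebbles on the endpoints of the edge to be added) can be replaced by a
sequence of pebble-slide moves from the same configuration, none of which creates a
monochromatic cycle, after which the same add-edge move is possible. -/
theorem canonical_pebble_slide {V : Type} [Fintype V] [DecidableEq V]
    (k ℓ : ℕ) (hk : 1 ≤ k) (hℓ : ℓ ≤ 2 * k - 1) (H H' : PGConfig V k)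
    (hH : Reachable k ℓ H)
    (hslides : Relation.ReflTransGen (SlideRel k) H H') (v w : V)
    (hadd : ℓ + 1 ≤ ∑ u ∈ ({v, w} : Finset V), (H'.pebs u).card) :
    ∃ H'' : PGConfig V k,
      Relation.ReflTransGen
        (fun A B => SlideRel k A B ∧
          ∀ i : Fin k, HasCycle (monoEdges B i) → HasCycle (monoEdges A i)) H H'' ∧
      ℓ + 1 ≤ ∑ u ∈ ({v, w} : Finset V), (H''.pebs u).card := by
  obtain ⟨B, hstar, _, _, hcnt⟩ := simulate hH hslides
  refine ⟨B, hstar, ?_⟩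
  calc ℓ + 1 ≤ ∑ u ∈ ({v, w} : Finset V), (H'.pebs u).card := hadd
    _ = ∑ u ∈ ({v, w} : Finset V), (B.pebs u).card :=
        Finset.sum_congr rfl fun u _ => (hcnt u).symm
end

section
/- (Pebble games and slider-pinning.) Let H be any reachable configuration of the (2,3)-pebble game with colors. Replacing each pebble that lies on a vertex by a loop at that vertex yields a (2,0,3)-graded-tight graph: every subgraph of the resulting graph containing no loops is (2,3)-sparse, and the resulting graph, with loops included, is (2,0)-tight. -/
open scoped Classical

open PebbleGame

section Aux

variable {V : Type} [DecidableEq V]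

/-- The out-degree of a vertex in a configuration. -/
def outdeg (H : PGConfig V 2) (v : V) : ℕ :=
  (H.edges.filter fun e => e.1 = v).card

lemma card_filter_mem (M : Multiset (V × V × Fin 2)) (S : Finset V) :
    (M.filter fun e => e.1 ∈ S).card = ∑ v ∈ S, (M.filter fun e => e.1 = v).card := by
  induction S using Finset.induction_on with
  | empty =>
    simp only [Finset.notMem_empty, Finset.sum_empty]
    rw [Multiset.card_eq_zero, Multiset.filter_eq_nil]
    exact fun a _ h => h
  | @insert a s ha ih =>
    rw [Finset.sum_insert ha, ← ih]
    have h1 : (M.filter fun e => e.1 ∈ insert a s)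
        = M.filter fun e => e.1 = a ∨ e.1 ∈ s := by
      apply Multiset.filter_congr; intro e _; simp [Finset.mem_insert]
    have h2 : (M.filter fun e => e.1 = a ∧ e.1 ∈ s) = 0 := by
      rw [Multiset.filter_eq_nil]
      rintro e _ ⟨h, h'⟩
      exact ha (h ▸ h')
    have h3 := Multiset.filter_add_filter (fun e : V × V × Fin 2 => e.1 = a)
      (fun e : V × V × Fin 2 => e.1 ∈ s) M
    rw [h2, add_zero] at h3
    rw [h1, ← h3, Multiset.card_add]

lemma spanned_card_le (H : PGConfig V 2) (S : Finset V) :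
    Multiset.card (spanned (undirected H) S) ≤ ∑ v ∈ S, outdeg H v := by
  unfold outdeg
  rw [← card_filter_mem]
  unfold spanned undirected
  rw [Multiset.filter_map, Multiset.card_map]
  apply Multiset.card_le_card
  apply Multiset.monotone_filter_right
  intro e he
  exact (Finset.mk_mem_sym2_iff.1 he).1

lemma undirected_addEdge (H : PGConfig V 2) (v w : V) (c : Fin 2) :
    undirected (addEdgeCfg H v w c) = s(v, w) ::ₘ undirected H := by
  simp [undirected, addEdgeCfg]

lemma undirected_slide (H : PGConfig V 2) (v w : V) (c c' : Fin 2)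
    (he : (v, w, c) ∈ H.edges) :
    undirected (slideCfg H v w c c') = undirected H := by
  unfold undirected slideCfg
  conv_rhs => rw [← Multiset.cons_erase he]
  simp [Sym2.eq_swap]

lemma spanned_cons (a : Sym2 V) (E : Multiset (Sym2 V)) (S : Finset V) :
    spanned (a ::ₘ E) S = (if a ∈ S.sym2 then {a} else 0) + spanned E S := by
  unfold spanned
  rw [Multiset.filter_cons]

lemma spanned_add (E E' : Multiset (Sym2 V)) (S : Finset V) :
    spanned (E + E') S = spanned E S + spanned E' S := by
  unfold spanned
  rw [Multiset.filter_add]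

lemma spanned_le_spanned {E E' : Multiset (Sym2 V)} (h : E ≤ E') (S : Finset V) :
    spanned E S ≤ spanned E' S := by
  unfold spanned
  exact Multiset.filter_le_filter _ h

lemma pg_step (H H' : PGConfig V 2) (hstep : Step 2 3 H H')
    (ihA : ∀ v, outdeg H v + Multiset.card (H.pebs v) = 2)
    (ihB : ∀ S : Finset V, 2 ≤ S.card →
      Multiset.card (spanned (undirected H) S) + 3 ≤ 2 * S.card) :
    (∀ v, outdeg H' v + Multiset.card (H'.pebs v) = 2) ∧
      (∀ S : Finset V, 2 ≤ S.card →
        Multiset.card (spanned (undirected H') S) + 3 ≤ 2 * S.card) := by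
  cases hstep with
  | add v w c hpeb hc =>
    have hvw : v ≠ w := by
      intro h
      have hvv : ({v, w} : Finset V) = {v} := by rw [← h]; simp
      rw [hvv, Finset.sum_singleton] at hpeb
      have := ihA v
      omega
    rw [Finset.sum_pair hvw] at hpeb
    constructor
    · intro u
      by_cases hu : u = v
      · subst hu
        have hpos : c ∈ H.pebs u := hc
        have hp0 : 0 < Multiset.card (H.pebs u) :=
          Multiset.card_pos.2 fun h0 => by simp [h0] at hpos
        have hout : outdeg (addEdgeCfg H u w c) u = outdeg H u + 1 := by
          simp [outdeg, addEdgeCfg, Multiset.filter_cons, add_comm]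
        have hpe : (addEdgeCfg H u w c).pebs u = (H.pebs u).erase c := by
          simp [addEdgeCfg]
        rw [hout, hpe, Multiset.card_erase_of_mem hc, Nat.pred_eq_sub_one]
        have h5 := ihA u
        omega
      · have h1 : outdeg (addEdgeCfg H v w c) u = outdeg H u := by
          unfold outdeg addEdgeCfg
          rw [Multiset.filter_cons_of_neg]
          exact fun h => hu h.symm
        have h2 : (addEdgeCfg H v w c).pebs u = H.pebs u := by
          simp [addEdgeCfg, Function.update_of_ne hu]
        rw [h1, h2]
        exact ihA u
    · intro S hS
      rw [undirected_addEdge, spanned_cons]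
      by_cases hmem : s(v, w) ∈ S.sym2
      · rw [if_pos hmem, Multiset.card_add, Multiset.card_singleton]
        obtain ⟨hvS, hwS⟩ := Finset.mk_mem_sym2_iff.1 hmem
        have h1 := spanned_card_le H S
        have h2 : ∑ u ∈ S, (outdeg H u + Multiset.card (H.pebs u)) = 2 * S.card := by
          rw [Finset.sum_congr rfl fun u _ => ihA u]
          simp [mul_comm]
        rw [Finset.sum_add_distrib] at h2
        have h3 : Multiset.card (H.pebs v) + Multiset.card (H.pebs w)
            ≤ ∑ u ∈ S, Multiset.card (H.pebs u) := by
          have hsub : ({v, w} : Finset V) ⊆ S := by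
            intro x hx
            rcases Finset.mem_insert.1 hx with h | h
            · exact h ▸ hvS
            · exact (Finset.mem_singleton.1 h) ▸ hwS
          have h4 := Finset.sum_le_sum_of_subset
            (f := fun u => Multiset.card (H.pebs u)) hsub
          rwa [Finset.sum_pair hvw] at h4
        omega
      · rw [if_neg hmem, Multiset.card_add, Multiset.card_zero]
        have := ihB S hS
        omega
  | slide v w c c' he hc =>
    constructor
    · intro u
      have hcard : H.edges = (v, w, c) ::ₘ H.edges.erase (v, w, c) :=
        (Multiset.cons_erase he).symm
      have hout : outdeg H u =
          (if v = u then 1 else 0)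
            + Multiset.card ((H.edges.erase (v, w, c)).filter fun e => e.1 = u) := by
        conv_lhs => rw [outdeg, hcard]
        rw [Multiset.filter_cons, Multiset.card_add]
        congr 1
        by_cases hx : v = u <;> simp [hx]
      have hout' : outdeg (slideCfg H v w c c') u =
          (if w = u then 1 else 0)
            + Multiset.card ((H.edges.erase (v, w, c)).filter fun e => e.1 = u) := by
        rw [outdeg, slideCfg, Multiset.filter_cons, Multiset.card_add]
        congr 1
        by_cases hx : w = u <;> simp [hx]
      have hpw : 0 < Multiset.card (H.pebs w) :=
        Multiset.card_pos.2 fun h0 => by simp [h0] at hc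
      have hP1 : ∀ x, Multiset.card (Function.update H.pebs w ((H.pebs w).erase c') x)
          = if x = w then Multiset.card (H.pebs w) - 1 else Multiset.card (H.pebs x) := by
        intro x
        by_cases hx : x = w
        · subst hx
          rw [Function.update_self, Multiset.card_erase_of_mem hc, if_pos rfl]
          exact Nat.pred_eq_sub_one
        · rw [Function.update_of_ne hx, if_neg hx]
      have hpe : ∀ x, (slideCfg H v w c c').pebs x =
          Function.update (Function.update H.pebs w ((H.pebs w).erase c')) v
            (c ::ₘ Function.update H.pebs w ((H.pebs w).erase c') v) x := fun _ => rfl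
      have h5 := ihA u
      rw [hout']
      by_cases huv : u = v
      · have hov : 1 ≤ outdeg H u := by
          have hm : (v, w, c) ∈ H.edges.filter fun e => e.1 = u := by
            rw [Multiset.mem_filter]
            exact ⟨he, huv.symm⟩
          exact Multiset.card_pos.2 fun h0 => by simp [h0] at hm
        rw [if_pos huv.symm] at hout
        have hpcard : Multiset.card ((slideCfg H v w c c').pebs u) =
            (if v = w then Multiset.card (H.pebs w) - 1 else Multiset.card (H.pebs v)) + 1 := by
          rw [hpe u, huv, Function.update_self, Multiset.card_cons, hP1 v]
        rw [hpcard]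
        by_cases huw : u = w
        · have hvw' : v = w := huv.symm.trans huw
          have hpu : Multiset.card (H.pebs u) = Multiset.card (H.pebs w) := by rw [huw]
          rw [if_pos huw.symm, if_pos hvw']
          omega
        · have hvw' : v ≠ w := fun h => huw (huv.trans h)
          have hpu : Multiset.card (H.pebs u) = Multiset.card (H.pebs v) := by rw [huv]
          rw [if_neg (fun h => huw h.symm), if_neg hvw']
          omega
      · rw [if_neg (fun h => huv h.symm)] at hout
        have hpcard : Multiset.card ((slideCfg H v w c c').pebs u) =
            if u = w then Multiset.card (H.pebs w) - 1 else Multiset.card (H.pebs u) := by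
          rw [hpe u, Function.update_of_ne huv, hP1 u]
        rw [hpcard]
        by_cases huw : u = w
        · have hpu : Multiset.card (H.pebs u) = Multiset.card (H.pebs w) := by rw [huw]
          rw [if_pos huw.symm, if_pos huw]
          omega
        · rw [if_neg (fun h => huw h.symm), if_neg huw]
          omega
    · intro S hS
      rw [undirected_slide H v w c c' he]
      exact ihB S hS

/-- The combined invariant of reachable configurations of the (2,3)-pebble game. -/
lemma pg_invariant [Fintype V] (H : PGConfig V 2) (hH : Reachable 2 3 H) :
    (∀ v, outdeg H v + Multiset.card (H.pebs v) = 2) ∧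
      (∀ S : Finset V, 2 ≤ S.card →
        Multiset.card (spanned (undirected H) S) + 3 ≤ 2 * S.card) := by
  induction hH with
  | refl =>
    constructor
    · intro v; simp [initCfg, outdeg]
    · intro S hS; simp [initCfg, undirected, spanned]; omega
  | tail _ hstep ih =>
    exact pg_step _ _ hstep ih.1 ih.2

lemma multiset_filter_bind {α β : Type*} (s : Multiset α) (f : α → Multiset β)
    (p : β → Prop) [DecidablePred p] :
    (s.bind f).filter p = s.bind fun a => (f a).filter p := by
  induction s using Multiset.induction_on with
  | empty => simp
  | cons a s ih => simp [Multiset.filter_add, ih]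

lemma loops_spanned_card [Fintype V] (P : V → Multiset (Fin 2)) (S : Finset V) :
    Multiset.card (spanned
      ((Finset.univ.val : Multiset V).bind fun v =>
        Multiset.replicate (Multiset.card (P v)) s(v, v)) S)
      = ∑ v ∈ S, Multiset.card (P v) := by
  unfold spanned
  rw [multiset_filter_bind, Multiset.card_bind]
  have h1 : ∀ v : V, (Multiset.card ∘ fun a => Multiset.filter (fun e => e ∈ S.sym2)
      (Multiset.replicate (Multiset.card (P a)) s(a, a))) v
      = if v ∈ S then Multiset.card (P v) else 0 := by
    intro v
    by_cases hv : v ∈ S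
    · rw [if_pos hv]
      simp only [Function.comp]
      rw [Multiset.filter_eq_self.2, Multiset.card_replicate]
      intro e he
      rw [Multiset.eq_of_mem_replicate he]
      exact Finset.mk_mem_sym2_iff.2 ⟨hv, hv⟩
    · rw [if_neg hv]
      simp only [Function.comp]
      rw [Multiset.filter_eq_nil.2, Multiset.card_zero]
      intro e he hmem
      rw [Multiset.eq_of_mem_replicate he] at hmem
      exact hv (Finset.mk_mem_sym2_iff.1 hmem).1
  rw [Multiset.map_congr rfl fun v _ => h1 v]
  rw [show ((Finset.univ.val : Multiset V).map
      fun v => if v ∈ S then Multiset.card (P v) else 0).sum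
    = ∑ v : V, if v ∈ S then Multiset.card (P v) else 0 from rfl]
  rw [Finset.sum_ite_mem, Finset.univ_inter]

end Aux

/-- pebble games and slider-pinning: replacing the pebbles on vertices
of any reachable configuration of the `(2,3)`-pebble game by loops yields a
`(2,0,3)`-graded-tight graph: every subgraph containing no loops is `(2,3)`-sparse,
and the whole graph, loops included, is `(2,0)`-tight. -/
theorem pebbles_to_loops_graded_tight {V : Type} [Fintype V] [DecidableEq V]
    (H : PGConfig V 2) (hH : Reachable 2 3 H) :
    (∀ F : Multiset (Sym2 V), F ≤ withLoops H → (∀ e ∈ F, ¬e.IsDiag) →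
        Sparse 2 3 F) ∧
      Tight 2 0 (withLoops H) := by
  obtain ⟨ihA, ihB⟩ := pg_invariant H hH
  constructor
  · intro F hFle hnd
    have hFund : F ≤ undirected H := by
      have h0 : F = F.filter fun e => ¬e.IsDiag := (Multiset.filter_eq_self.2 hnd).symm
      have h1 : (F.filter fun e => ¬e.IsDiag)
          ≤ (withLoops H).filter fun e => ¬e.IsDiag :=
        Multiset.filter_le_filter _ hFle
      have h2 : (((Finset.univ.val : Multiset V).bind fun v =>
          Multiset.replicate (Multiset.card (H.pebs v)) s(v, v)).filter
            fun e => ¬e.IsDiag) = 0 := by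
        rw [Multiset.filter_eq_nil]
        intro e he hcon
        rw [Multiset.mem_bind] at he
        obtain ⟨v, _, hv⟩ := he
        exact hcon ((Multiset.eq_of_mem_replicate hv) ▸ Sym2.mk_isDiag_iff.2 rfl)
      rw [withLoops, Multiset.filter_add, h2, add_zero] at h1
      calc F = F.filter fun e => ¬e.IsDiag := h0
        _ ≤ (undirected H).filter fun e => ¬e.IsDiag := h1
        _ ≤ undirected H := Multiset.filter_le _ _
    intro S hSne
    have hsub : Multiset.card (spanned F S) ≤ Multiset.card (spanned (undirected H) S) :=
      Multiset.card_le_card (spanned_le_spanned hFund S)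
    rcases lt_or_ge S.card 2 with h2 | h2
    · have hc1 : S.card = 1 := by
        have := Finset.card_pos.2 hSne; omega
      obtain ⟨v, hv⟩ := Finset.card_eq_one.1 hc1
      have hz : spanned F S = 0 := by
        unfold spanned
        rw [Multiset.filter_eq_nil]
        intro e heF hmem
        subst hv
        induction e using Sym2.ind with
        | _ a b =>
          obtain ⟨ha, hb⟩ := Finset.mk_mem_sym2_iff.1 hmem
          rw [Finset.mem_singleton] at ha hb
          exact hnd _ heF (Sym2.mk_isDiag_iff.2 (ha.trans hb.symm))
      rw [hz]
      simp
    · have h3 := ihB S h2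
      omega
  · constructor
    · intro S _
      rw [withLoops, spanned_add, Multiset.card_add]
      have h1 := spanned_card_le H S
      have h2 := loops_spanned_card H.pebs S
      have h3 : ∑ u ∈ S, (outdeg H u + Multiset.card (H.pebs u)) = 2 * S.card := by
        rw [Finset.sum_congr rfl fun u _ => ihA u]
        simp [mul_comm]
      rw [Finset.sum_add_distrib] at h3
      omega
    · rw [withLoops, Multiset.card_add]
      have hu : Multiset.card (undirected H) = Multiset.card H.edges := by
        simp [undirected]
      rw [hu]
      have hedges : Multiset.card H.edges = ∑ v : V, outdeg H v := by
        have hself : (H.edges.filter fun e => e.1 ∈ (Finset.univ : Finset V)) = H.edges :=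
          Multiset.filter_eq_self.2 fun e _ => Finset.mem_univ _
        unfold outdeg
        rw [← card_filter_mem H.edges Finset.univ, hself]
      have hloops : Multiset.card ((Finset.univ.val : Multiset V).bind fun v =>
          Multiset.replicate (Multiset.card (H.pebs v)) s(v, v))
          = ∑ v : V, Multiset.card (H.pebs v) := by
        rw [Multiset.card_bind]
        have hc : (Multiset.card ∘ fun v =>
            Multiset.replicate (Multiset.card (H.pebs v)) s(v, v))
            = fun v => Multiset.card (H.pebs v) := by
          funext v; simp
        rw [hc]
        rfl
      rw [hedges, hloops, ← Finset.sum_add_distrib, Nat.sub_zero,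
        Finset.sum_congr rfl fun v _ => ihA v]
      simp [mul_comm, Finset.card_univ]
end
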